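/- Let q = p^f be a prime power, let A be a finite direct sum of finite field extensions of 𝔽_q, let ζ_p be a primitive p-th root of unity in ℂ, and let ψ(x) = ζ_p^{Tr_{A/𝔽_p}(x)} be the trace additive character. Then for every multiplicative character χ : A^× → ℂ^× there exists a nonnegative integer f' such that |g_A(χ)|² = q^{f'}, where g_A(χ) = Σ_{x ∈ A^×} ψ(x) χ(x). -/

import Mathlib

open scoped BigOperators

/-- The trace additive character `ψ_A(x) = ζ_p^{Tr_{A/𝔽_p}(x)}` of a finite `ZMod p`-algebra. -/
noncomputable def traceAddChar (p : ℕ) [Fact p.Prime] (A : Type*) [CommRing A]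
    [Algebra (ZMod p) A] (ζ : ℂ) (x : A) : ℂ :=
  ζ ^ (Algebra.trace (ZMod p) A x).val

/-- The Gauss sum `g_A(χ) = ∑_{x ∈ A^×} ψ_A(x) χ(x)` of a multiplicative character `χ`
of a finite commutative algebra `A`, with respect to the trace additive character. -/
noncomputable def algGaussSum (p : ℕ) [Fact p.Prime] (A : Type*) [CommRing A] [Fintype A]
    [DecidableEq A] [Algebra (ZMod p) A] (ζ : ℂ) (χ : Aˣ →* ℂˣ) : ℂ :=
  ∑ x : Aˣ, traceAddChar p A ζ (x : A) * (χ x : ℂ)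


/-- Units of a product of monoids. -/
def piUnitsAux {ι : Type*} {M : ι → Type*} [∀ i, Monoid (M i)] :
    (∀ i, M i)ˣ ≃* ∀ i, (M i)ˣ where
  toFun u i := ⟨u.val i, u.inv i, congrFun u.val_inv i, congrFun u.inv_val i⟩
  invFun v := ⟨fun i => (v i : M i), fun i => ((v i)⁻¹ : (M i)ˣ),
    funext fun i => (v i).mul_inv, funext fun i => (v i).inv_mul⟩
  left_inv u := Units.ext rfl
  right_inv v := funext fun i => Units.ext rfl
  map_mul' u v := rfl

lemma AddChar.map_finset_sum' {A M ι : Type*} [AddCommMonoid A] [CommMonoid M] (ψ : AddChar A M)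
    (s : Finset ι) (f : ι → A) : ψ (∑ i ∈ s, f i) = ∏ i ∈ s, ψ (f i) := by
  classical
  induction s using Finset.cons_induction with
  | empty => simp
  | cons a s ha ih => rw [Finset.sum_cons, Finset.prod_cons, ψ.map_add_eq_mul, ih]

lemma trace_pi_apply (R : Type*) [Field R] {ι : Type*} [Fintype ι] [DecidableEq ι]
    (K : ι → Type*) [∀ i, CommRing (K i)] [∀ i, Algebra R (K i)]
    [∀ i, Module.Finite R (K i)] (x : ∀ i, K i) :
    Algebra.trace R (∀ i, K i) x = ∑ i, Algebra.trace R (K i) (x i) := by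
  let b : ∀ i, Module.Basis (Fin (Module.finrank R (K i))) R (K i) := fun i => Module.finBasis R (K i)
  rw [Algebra.trace_eq_matrix_trace (Pi.basis b) x, Matrix.trace]
  have h : ∀ i, Algebra.trace R (K i) (x i)
      = ∑ j, (b i).repr (x i * b i j) j := by
    intro i
    rw [Algebra.trace_eq_matrix_trace (b i) (x i), Matrix.trace]
    refine Finset.sum_congr rfl fun j _ => ?_
    rw [Matrix.diag_apply, Algebra.leftMulMatrix_eq_repr_mul]
  simp_rw [h]
  rw [← Finset.univ_sigma_univ, Finset.sum_sigma]
  refine Finset.sum_congr rfl fun σ _ => Finset.sum_congr rfl fun j _ => ?_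
  set τ : (j : ι) × Fin (Module.finrank R (K j)) := ⟨σ, j⟩ with hτ
  have hx : (x * Pi.basis b τ) τ.1 = x τ.1 * b τ.1 τ.2 := by
    rw [Pi.mul_apply, Pi.basis_apply, Pi.single_eq_same]
  rw [Matrix.diag_apply, Algebra.leftMulMatrix_eq_repr_mul, Pi.basis_repr, hx]

lemma sum_units_eq {K : Type*} [Field K] [Fintype K] [DecidableEq K] (g : K → ℂ) :
    ∑ u : Kˣ, g u = ∑ a ∈ Finset.univ.erase 0, g a := by
  rw [Finset.sum_subtype (p := fun a : K => a ≠ 0) (Finset.univ.erase (0:K)) (by simp) g]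
  exact Fintype.sum_equiv unitsEquivNeZero _ _ (fun u => rfl)

lemma abs_sq_field_gauss (p : ℕ) [Fact p.Prime] (K : Type*) [Field K] [Fintype K]
    [DecidableEq K] [Algebra (ZMod p) K] (ζ : ℂ) (hζ : IsPrimitiveRoot ζ p) (χ : Kˣ →* ℂˣ) :
    ‖∑ u : Kˣ, traceAddChar p K ζ (u : K) * (χ u : ℂ)‖ ^ 2 = 1 ∨
    ‖∑ u : Kˣ, traceAddChar p K ζ (u : K) * (χ u : ℂ)‖ ^ 2 = Fintype.card K := by
  haveI : NeZero p := ⟨(Fact.out : p.Prime).ne_zero⟩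
  haveI : CharP K p := charP_of_injective_ringHom (algebraMap (ZMod p) K).injective p
  have hp0 : 0 < ringChar K := by
    rw [ringChar.eq (R := K) p]; exact (Fact.out : p.Prime).pos
  set ψ₀ : AddChar (ZMod p) ℂ := AddChar.zmodChar p hζ.pow_eq_one with hψ₀
  set ψK : AddChar K ℂ :=
    ψ₀.compAddMonoidHom (Algebra.trace (ZMod p) K).toAddMonoidHom with hψK
  have htA : ∀ a : K, ψK a = traceAddChar p K ζ a := fun a => rfl
  -- the trace is not identically zero
  have hex : ∃ b : K, Algebra.trace (ZMod p) K b ≠ 0 := by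
    by_contra hf
    push_neg at hf
    have h0 := (traceForm_nondegenerate (ZMod p) K).1 1 fun y => by
      simpa [Algebra.traceForm_apply] using hf y
    exact one_ne_zero h0
  obtain ⟨b, hb⟩ := hex
  have hprim0 : ψ₀.IsPrimitive := AddChar.zmodChar_primitive_of_primitive_root p hζ
  have hψ1 : ψK ≠ 1 := by
    rw [AddChar.ne_one_iff]
    exact ⟨b, fun hcontra =>
      hb ((hprim0.zmod_char_eq_one_iff p (Algebra.trace (ZMod p) K b)).mp hcontra)⟩
  have hψ : ψK.IsPrimitive := AddChar.IsPrimitive.of_ne_one hψ1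
  by_cases hχ1 : χ = 1
  · left
    subst hχ1
    have hS : (∑ u : Kˣ, traceAddChar p K ζ (u : K) * ((1 : Kˣ →* ℂˣ) u : ℂ)) = -1 := by
      have h1 : ∀ u : Kˣ, traceAddChar p K ζ (u : K) * ((1 : Kˣ →* ℂˣ) u : ℂ)
          = ψK (u : K) := by
        intro u; rw [htA]; simp
      rw [Finset.sum_congr rfl fun u _ => h1 u]
      rw [sum_units_eq (fun a => ψK a),
        Finset.sum_erase_eq_sub (Finset.mem_univ (0 : K)),
        AddChar.sum_eq_zero_of_ne_one hψ1]
      simp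
    rw [hS]
    simp
  · right
    set M : MulChar K ℂ := MulChar.ofUnitHom χ with hMdef
    have hM : M ≠ 1 := by
      rw [MulChar.ne_one_iff]
      obtain ⟨u, hu⟩ := DFunLike.ne_iff.mp hχ1
      refine ⟨u, ?_⟩
      rw [hMdef, MulChar.ofUnitHom_coe]
      exact fun h => hu (by simpa using Units.ext (by simpa using h))
    have hgs : gaussSum M ψK = ∑ u : Kˣ, traceAddChar p K ζ (u : K) * (χ u : ℂ) := by
      have h0 : M (0 : K) * ψK 0 = 0 := by rw [M.map_zero, zero_mul]
      calc gaussSum M ψK = ∑ a : K, M a * ψK a := rfl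
        _ = ∑ a ∈ Finset.univ.erase (0 : K), M a * ψK a :=
            (Finset.sum_erase Finset.univ (f := fun a => M a * ψK a) h0).symm
        _ = ∑ u : Kˣ, M (u : K) * ψK (u : K) :=
            (sum_units_eq (fun a => M a * ψK a)).symm
        _ = ∑ u : Kˣ, traceAddChar p K ζ (u : K) * (χ u : ℂ) := by
            refine Finset.sum_congr rfl fun u _ => ?_
            rw [hMdef, MulChar.ofUnitHom_coe, htA, mul_comm]
    have hstar : (starRingEnd ℂ) (gaussSum M ψK) = gaussSum M⁻¹ ψK⁻¹ := by
      rw [gaussSum, gaussSum, map_sum]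
      refine Finset.sum_congr rfl fun a _ => ?_
      rw [map_mul, AddChar.starComp_apply hp0, starRingEnd_apply, MulChar.star_apply']
    have key := gaussSum_mul_gaussSum_eq_card hM hψ
    rw [← hstar, Complex.mul_conj] at key
    have habs : ‖gaussSum M ψK‖ ^ 2 = (Fintype.card K : ℝ) := by
      rw [Complex.sq_norm]
      exact_mod_cast key
    rw [← hgs, habs]

/-- **Absolute value of Gauss sums on semisimple algebras** (Beukers, Prop. in §2).
Let `A = ⊕ᵢ Kᵢ` be a finite direct sum of finite field extensions of `𝔽_q`, with the
trace additive character `ψ(x) = ζ^{Tr_{A/𝔽_p}(x)}`. Then for every multiplicative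
character `χ : A^× → ℂ^×` there is a nonnegative integer `f'` with `|g_A(χ)|² = q^{f'}`. -/
theorem abs_sq_algGaussSum_eq_pow_card
    (p : ℕ) [Fact p.Prime] (F : Type*) [Field F] [Fintype F] [Algebra (ZMod p) F]
    (ι : Type*) [Fintype ι] [DecidableEq ι]
    (K : ι → Type*) [∀ i, Field (K i)] [∀ i, Fintype (K i)] [∀ i, DecidableEq (K i)]
    [∀ i, Algebra (ZMod p) (K i)] [∀ i, Algebra F (K i)]
    [∀ i, IsScalarTower (ZMod p) F (K i)]
    (ζ : ℂ) (hζ : IsPrimitiveRoot ζ p)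
    (χ : (∀ i, K i)ˣ →* ℂˣ) :
    ∃ f' : ℕ, ‖algGaussSum p (∀ i, K i) ζ χ‖ ^ 2 = (Fintype.card F : ℝ) ^ f' := by
  classical
  haveI : NeZero p := ⟨(Fact.out : p.Prime).ne_zero⟩
  set A := ∀ i, K i with hA
  let e : Aˣ ≃* ∀ i, (K i)ˣ := piUnitsAux
  let φ : (∀ i, (K i)ˣ) →* ℂˣ := χ.comp e.symm.toMonoidHom
  let χi : ∀ i, (K i)ˣ →* ℂˣ := fun i => φ.comp (MonoidHom.mulSingle (fun i => (K i)ˣ) i)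
  let g : ∀ i, (K i)ˣ → ℂ := fun i u => traceAddChar p (K i) ζ (u : K i) * (χi i u : ℂ)
  let S : ι → ℂ := fun i => ∑ u : (K i)ˣ, g i u
  set ψ₀ : AddChar (ZMod p) ℂ := AddChar.zmodChar p hζ.pow_eq_one with hψ₀
  have hfact : algGaussSum p A ζ χ = ∏ i, S i := by
    rw [algGaussSum, ← Equiv.sum_comp e.symm.toEquiv
      (fun x : Aˣ => traceAddChar p A ζ (x : A) * (χ x : ℂ))]
    have hterm : ∀ v : ∀ i, (K i)ˣ,
        traceAddChar p A ζ ((e.symm v : Aˣ) : A) * (χ (e.symm v) : ℂ)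
          = ∏ i, g i (v i) := by
      intro v
      rw [Finset.prod_mul_distrib]
      congr 1
      · -- trace part
        have h1 : ((e.symm v : Aˣ) : A) = fun i => (v i : K i) := rfl
        have h2 : traceAddChar p A ζ ((e.symm v : Aˣ) : A)
            = ψ₀ (Algebra.trace (ZMod p) A ((e.symm v : Aˣ) : A)) := rfl
        rw [h2, h1, trace_pi_apply (ZMod p) K, AddChar.map_finset_sum']
        exact Finset.prod_congr rfl fun i _ => rfl
      · -- character part
        have h3 : ∏ i, χi i (v i) = χ (e.symm v) := by
          have : ∏ i, χi i (v i) = φ (∏ i, Pi.mulSingle i (v i)) := by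
            rw [map_prod]
            rfl
          rw [this, Finset.univ_prod_mulSingle]
          rfl
        rw [← h3]
        exact map_prod (Units.coeHom ℂ) _ _
    refine (Finset.sum_congr rfl fun v _ => hterm v).trans ?_
    calc ∑ v : ∀ i, (K i)ˣ, ∏ i, g i (v i)
        = ∑ v ∈ Fintype.piFinset (fun i => (Finset.univ : Finset (K i)ˣ)), ∏ i, g i (v i) := by
          rw [Fintype.piFinset_univ]
      _ = ∏ i, ∑ u : (K i)ˣ, g i u := (Finset.prod_univ_sum _ _).symm
  have hFD : ∀ i, FiniteDimensional F (K i) := fun i => Module.Finite.of_finite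
  have hi : ∀ i, ∃ ei : ℕ, ‖S i‖ ^ 2 = (Fintype.card F : ℝ) ^ ei := by
    intro i
    rcases abs_sq_field_gauss p (K i) ζ hζ (χi i) with h | h
    · exact ⟨0, by rw [pow_zero]; exact h⟩
    · refine ⟨Module.finrank F (K i), ?_⟩
      rw [show S i = ∑ u : (K i)ˣ, traceAddChar p (K i) ζ (u : K i) * ((χi i) u : ℂ) from rfl,
        h, Module.card_eq_pow_finrank (K := F) (V := K i)]
      push_cast
      ring
  choose ei hei using hi
  refine ⟨∑ i, ei i, ?_⟩
  rw [hfact, norm_prod, ← Finset.prod_pow]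
  rw [Finset.prod_congr rfl fun i _ => hei i]
  rw [Finset.prod_pow_eq_pow_sum]
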